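/- arXiv:2601.17305 — 2 statements merged into one kernel-verified Lean document; each statement's English description precedes it below -/
import Mathlib

section
/- Let A ∈ ℝ^{m×n}, d ∈ ℝ^m, μ > 0 and Σ_h = μI_m. For u = (u^(1),…,u^(N)) ∈ (ℝⁿ)^N define g(u)^(i) = u^(i) + C(u)Aᵀ(Σ_h + AC(u)Aᵀ)⁻¹(d − Au^(i)) and, for α ≥ 1, g_m(u,α)^(i) = u^(i) + α·C(u)Aᵀ(Σ_h + α·AC(u)Aᵀ)⁻¹(d − Au^(i)) (so g_m(·,1) = g). Let (α_k)_{k≥0} be a bounded real sequence with α_k ≥ 1 for all k and α_k → 1, let u₀ ∈ (ℝⁿ)^N, define u_{k+1} = g_m(u_k, α_k), and let D ⊆ ℝⁿ be the linear span of {u₀^(1),…,u₀^(N)}. Assume: (i) for every ensemble w ∈ (ℝⁿ)^N with all members in D, the iteration w_{k+1} = g(w_k) starting at w converges, and all members of its limit are equal; (ii) the sequence (u_k) is bounded in (ℝⁿ)^N; (iii) there exist k₀ ∈ ℕ and L ∈ [0,1) such that, defining v_{k₀} = u_{k₀} and v_{k+1} = g(v_k) for k ≥ k₀, one has ‖g(u_k)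 − g(v_k)‖₂ ≤ L·‖u_k − v_k‖₂ for all k ≥ k₀. Then: (a) u_k^(i) ∈ D for all k and i; (b) the sequence (u_k) converges to a limit u* satisfying u* = g(u*) (a fixed point of the unperturbed EnKI map); and (c) all N ensemble members of u* are equal. -/
open Matrix Filter

/-- The sample covariance matrix of an ensemble `u = (u^(1),…,u^(N))` of vectors in `ℝⁿ`:
`C(u) = (1/N) ∑ᵢ (u^(i) − ū)(u^(i) − ū)ᵀ`, where `ū = (1/N) ∑ᵢ u^(i)`. -/
noncomputable def sampleCov {n N : ℕ} (u : Fin N → Fin n → ℝ) : Matrix (Fin n) (Fin n) ℝ :=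
  (N : ℝ)⁻¹ • ∑ i, vecMulVec (u i - (N : ℝ)⁻¹ • ∑ j, u j) (u i - (N : ℝ)⁻¹ • ∑ j, u j)

/-- One step of the multiplicatively corrected Ensemble Kalman Inversion (EnKI-MC):
`g_m(u,α)^(i) = u^(i) + α·C(u)Aᵀ(μI + α·AC(u)Aᵀ)⁻¹(d − Au^(i))`; `g_m(·,1)` is the vanilla
EnKI map `g`. -/
noncomputable def enkiStep {m n N : ℕ} (A : Matrix (Fin m) (Fin n) ℝ) (d : Fin m → ℝ)
    (μ : ℝ) (α : ℝ) (u : Fin N → Fin n → ℝ) : Fin N → Fin n → ℝ :=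
  fun i => u i +
    (α • (sampleCov u * Aᵀ *
      (μ • (1 : Matrix (Fin m) (Fin m) ℝ) + α • (A * sampleCov u * Aᵀ))⁻¹)) *ᵥ
        (d - A *ᵥ u i)

/-- The Euclidean norm of an ensemble, viewed as an element of `ℝ^{nN}`. -/
noncomputable def ensNorm {n N : ℕ} (u : Fin N → Fin n → ℝ) : ℝ :=
  Real.sqrt (∑ i, ∑ j, (u i j) ^ 2)

section MyAux

lemma myVecMulVec_mulVec {n : ℕ} (v w x : Fin n → ℝ) :
    vecMulVec v w *ᵥ x = (w ⬝ᵥ x) • v := by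
  ext a
  simp [vecMulVec, mulVec, dotProduct, Finset.mul_sum, mul_comm, mul_assoc, mul_left_comm]

lemma myDotProduct_sum {n N : ℕ} (y : Fin n → ℝ) (z : Fin N → Fin n → ℝ) :
    y ⬝ᵥ (∑ i, z i) = ∑ i, y ⬝ᵥ z i := by
  simp only [dotProduct, Finset.sum_apply, Finset.mul_sum]
  rw [Finset.sum_comm]

lemma mySum_mulVec {n N : ℕ} (M : Fin N → Matrix (Fin n) (Fin n) ℝ) (x : Fin n → ℝ) :
    (∑ i, M i) *ᵥ x = ∑ i, M i *ᵥ x := by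
  ext a
  simp only [mulVec, dotProduct, Finset.sum_apply, Matrix.sum_apply, Finset.sum_mul]
  rw [Finset.sum_comm]

/-- `sampleCov u *ᵥ z` stays in any submodule containing all ensemble members. -/
lemma sampleCov_mulVec_mem {n N : ℕ} (D : Submodule ℝ (Fin n → ℝ))
    (u : Fin N → Fin n → ℝ) (hu : ∀ i, u i ∈ D) (z : Fin n → ℝ) :
    sampleCov u *ᵥ z ∈ D := by
  unfold sampleCov
  rw [Matrix.smul_mulVec, mySum_mulVec]
  refine D.smul_mem _ (Submodule.sum_mem _ fun i _ => ?_)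
  rw [myVecMulVec_mulVec]
  exact D.smul_mem _ (D.sub_mem (hu i) (D.smul_mem _ (Submodule.sum_mem _ fun j _ => hu j)))

lemma enkiStep_mem {m n N : ℕ} (A : Matrix (Fin m) (Fin n) ℝ) (d : Fin m → ℝ)
    (μ α : ℝ) (D : Submodule ℝ (Fin n → ℝ)) (u : Fin N → Fin n → ℝ)
    (hu : ∀ i, u i ∈ D) (i : Fin N) : enkiStep A d μ α u i ∈ D := by
  unfold enkiStep
  refine D.add_mem (hu i) ?_
  rw [Matrix.smul_mulVec, Matrix.mul_assoc, ← Matrix.mulVec_mulVec]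
  exact D.smul_mem _ (sampleCov_mulVec_mem D u hu _)

lemma dot_sampleCov_nonneg {n N : ℕ} (u : Fin N → Fin n → ℝ) (y : Fin n → ℝ) :
    0 ≤ y ⬝ᵥ (sampleCov u *ᵥ y) := by
  unfold sampleCov
  rw [Matrix.smul_mulVec, mySum_mulVec, dotProduct_smul]
  rw [myDotProduct_sum]
  refine smul_nonneg (by positivity) (Finset.sum_nonneg fun i _ => ?_)
  rw [myVecMulVec_mulVec, dotProduct_smul, smul_eq_mul, dotProduct_comm]
  exact mul_self_nonneg _

lemma det_Mm_ne_zero {m n N : ℕ} (A : Matrix (Fin m) (Fin n) ℝ) {μ : ℝ} (hμ : 0 < μ)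
    {α : ℝ} (hα : 0 ≤ α) (u : Fin N → Fin n → ℝ) :
    (μ • (1 : Matrix (Fin m) (Fin m) ℝ) + α • (A * sampleCov u * Aᵀ)).det ≠ 0 := by
  intro h0
  obtain ⟨v, hv, hMv⟩ := (Matrix.exists_mulVec_eq_zero_iff).mpr h0
  have h1 : v ⬝ᵥ ((μ • (1 : Matrix (Fin m) (Fin m) ℝ) + α • (A * sampleCov u * Aᵀ)) *ᵥ v) = 0 := by
    rw [hMv, dotProduct_zero]
  rw [Matrix.add_mulVec, Matrix.smul_mulVec, Matrix.smul_mulVec,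
    dotProduct_add, dotProduct_smul, dotProduct_smul, Matrix.one_mulVec] at h1
  have h2 : 0 ≤ v ⬝ᵥ (A * sampleCov u * Aᵀ) *ᵥ v := by
    rw [Matrix.mul_assoc, ← Matrix.mulVec_mulVec, Matrix.dotProduct_mulVec,
      ← Matrix.mulVec_transpose, ← Matrix.mulVec_mulVec]
    exact dot_sampleCov_nonneg u _
  have h3 : 0 < v ⬝ᵥ v := by
    have hnn : 0 ≤ v ⬝ᵥ v := Finset.sum_nonneg fun i _ => mul_self_nonneg _
    rcases (lt_or_eq_of_le hnn) with h | h
    · exact h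
    · exact absurd ((dotProduct_self_eq_zero).mp h.symm) hv
  have : 0 < μ * (v ⬝ᵥ v) + α * (v ⬝ᵥ (A * sampleCov u * Aᵀ) *ᵥ v) :=
    add_pos_of_pos_of_nonneg (mul_pos hμ h3) (mul_nonneg hα h2)
  simp only [smul_eq_mul] at h1
  linarith

lemma sampleCov_of_collapsed {n N : ℕ} (u : Fin N → Fin n → ℝ) (h : ∀ i j, u i = u j) :
    sampleCov u = 0 := by
  unfold sampleCov
  rw [Finset.sum_eq_zero, smul_zero]
  intro i _
  have hNpos : 0 < N := i.pos
  have hmean : (N : ℝ)⁻¹ • ∑ j, u j = u i := by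
    rw [Finset.sum_congr rfl fun j _ => h j i, Finset.sum_const, Finset.card_univ,
      Fintype.card_fin, ← Nat.cast_smul_eq_nsmul ℝ, smul_smul,
      inv_mul_cancel₀ (Nat.cast_ne_zero.mpr hNpos.ne'), one_smul]
  rw [hmean, sub_self]
  ext a b
  simp [vecMulVec]

end MyAux

section EnsNormAux

noncomputable def ensE {n N : ℕ} (u : Fin N → Fin n → ℝ) :
    EuclideanSpace ℝ (Fin N × Fin n) := WithLp.toLp 2 (fun p => u p.1 p.2)

lemma ensNorm_eq {n N : ℕ} (u : Fin N → Fin n → ℝ) : ensNorm u = ‖ensE u‖ := by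
  rw [EuclideanSpace.norm_eq, ensNorm]
  congr 1
  rw [Fintype.sum_prod_type]
  simp [ensE, sq_abs]

lemma ensE_add {n N : ℕ} (a b : Fin N → Fin n → ℝ) : ensE (a + b) = ensE a + ensE b := by
  ext p; simp [ensE]

lemma ensNorm_nonneg {n N : ℕ} (u : Fin N → Fin n → ℝ) : 0 ≤ ensNorm u := Real.sqrt_nonneg _

lemma ensNorm_zero {n N : ℕ} : ensNorm (0 : Fin N → Fin n → ℝ) = 0 := by
  simp [ensNorm]

lemma ensNorm_add_le {n N : ℕ} (a b : Fin N → Fin n → ℝ) :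
    ensNorm (a + b) ≤ ensNorm a + ensNorm b := by
  rw [ensNorm_eq, ensNorm_eq, ensNorm_eq, ensE_add]
  exact norm_add_le _ _

lemma pi_norm_le_ensNorm {n N : ℕ} (x : Fin N → Fin n → ℝ) : ‖x‖ ≤ ensNorm x := by
  rw [pi_norm_le_iff_of_nonneg (ensNorm_nonneg x)]
  intro i
  rw [pi_norm_le_iff_of_nonneg (ensNorm_nonneg x)]
  intro j
  rw [Real.norm_eq_abs, ← Real.sqrt_sq_eq_abs]
  apply Real.sqrt_le_sqrt
  have h1 : (x i j) ^ 2 ≤ ∑ j', (x i j') ^ 2 :=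
    Finset.single_le_sum (f := fun j' => x i j' ^ 2) (fun j' _ => sq_nonneg _) (Finset.mem_univ j)
  have h2 : ∑ j', (x i j') ^ 2 ≤ ∑ i', ∑ j', (x i' j') ^ 2 :=
    Finset.single_le_sum (f := fun i' => ∑ j', (x i' j') ^ 2)
      (fun i' _ => Finset.sum_nonneg fun j' _ => sq_nonneg _) (Finset.mem_univ i)
  exact le_trans h1 h2

lemma ensNorm_continuous {n N : ℕ} : Continuous (fun u : Fin N → Fin n → ℝ => ensNorm u) := by
  unfold ensNorm
  exact Real.continuous_sqrt.comp (continuous_finset_sum _ fun i _ =>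
    continuous_finset_sum _ fun j _ => ((continuous_apply j).comp (continuous_apply i)).pow 2)

end EnsNormAux

section Cont

variable {m n N : ℕ} (A : Matrix (Fin m) (Fin n) ℝ) (d : Fin m → ℝ) (μ : ℝ)

noncomputable def Mm (p : ℝ × (Fin N → Fin n → ℝ)) : Matrix (Fin m) (Fin m) ℝ :=
  μ • 1 + p.1 • (A * sampleCov p.2 * Aᵀ)

lemma sampleCov_continuous : Continuous (sampleCov : (Fin N → Fin n → ℝ) → _) := by
  unfold sampleCov
  refine Continuous.const_smul (continuous_finset_sum (Finset.univ : Finset (Fin N)) fun i _ => ?_) ((N : ℝ)⁻¹)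
  have he : Continuous fun u : Fin N → Fin n → ℝ => u i - (N : ℝ)⁻¹ • ∑ j, u j :=
    (continuous_apply i).sub (by fun_prop)
  exact he.matrix_vecMulVec he

lemma Mm_continuous : Continuous (Mm A μ (n := n) (N := N)) := by
  unfold Mm
  exact continuous_const.add (continuous_fst.smul
    (((continuous_const.matrix_mul (sampleCov_continuous.comp continuous_snd)).matrix_mul
      continuous_const)))

noncomputable def Phi (q : (ℝ × (Fin N → Fin n → ℝ)) × ℝ) : Fin N → Fin n → ℝ :=
  fun i => (q.1.1 • (sampleCov q.1.2 * Aᵀ * (q.2 • (Mm A μ q.1).adjugate))) *ᵥ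
    (d - A *ᵥ q.1.2 i)

lemma Phi_continuous : Continuous (Phi A d μ (n := n) (N := N)) := by
  unfold Phi
  refine continuous_pi fun i => Continuous.matrix_mulVec ?_ ?_
  · exact (continuous_fst.fst).smul
      (((sampleCov_continuous.comp (continuous_fst.snd)).matrix_mul continuous_const).matrix_mul
        (continuous_snd.smul ((Mm_continuous A μ).comp continuous_fst).matrix_adjugate))
  · exact continuous_const.sub
      (Continuous.matrix_mulVec continuous_const ((continuous_apply i).comp continuous_fst.snd))

lemma enkiStep_eq_Phi (p : ℝ × (Fin N → Fin n → ℝ)) :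
    enkiStep A d μ p.1 p.2 = fun i => p.2 i + Phi A d μ (p, ((Mm A μ p).det)⁻¹) i := by
  funext i
  simp only [enkiStep, Phi, Mm]
  rw [Matrix.inv_def, Ring.inverse_eq_inv']

lemma enki_diff_continuousAt (hμ : 0 < μ) {p : ℝ × (Fin N → Fin n → ℝ)} (hp : 0 ≤ p.1) :
    ContinuousAt (fun p : ℝ × (Fin N → Fin n → ℝ) =>
      enkiStep A d μ p.1 p.2 - enkiStep A d μ 1 p.2) p := by
  have key : (fun p : ℝ × (Fin N → Fin n → ℝ) =>
      enkiStep A d μ p.1 p.2 - enkiStep A d μ 1 p.2) =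
      fun p => Phi A d μ (p, ((Mm A μ p).det)⁻¹) -
        Phi A d μ ((1, p.2), ((Mm A μ (1, p.2)).det)⁻¹) := by
    funext q
    have h1 := enkiStep_eq_Phi A d μ q
    have h2 := enkiStep_eq_Phi A d μ (1, q.2)
    simp only at h1 h2
    rw [h1, h2]
    funext i
    simp only [Pi.sub_apply]
    abel
  rw [key]
  have hdet : Continuous fun p : ℝ × (Fin N → Fin n → ℝ) => (Mm A μ p).det :=
    (Mm_continuous A μ).matrix_det
  have hne1 : (Mm A μ p).det ≠ 0 := det_Mm_ne_zero A hμ hp p.2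
  have hne2 : (Mm A μ ((1 : ℝ), p.2)).det ≠ 0 := det_Mm_ne_zero A hμ zero_le_one p.2
  have c1 : ContinuousAt (fun p : ℝ × (Fin N → Fin n → ℝ) =>
      Phi A d μ (p, ((Mm A μ p).det)⁻¹)) p :=
    (Phi_continuous A d μ).continuousAt.comp
      (continuousAt_id.prodMk (hdet.continuousAt.inv₀ hne1))
  have c2 : ContinuousAt (fun p : ℝ × (Fin N → Fin n → ℝ) =>
      Phi A d μ ((1, p.2), ((Mm A μ (1, p.2)).det)⁻¹)) p := by
    refine (Phi_continuous A d μ).continuousAt.comp (ContinuousAt.prodMk ?_ ?_)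
    · exact (continuous_const.prodMk continuous_snd).continuousAt
    · exact ((hdet.comp (continuous_const.prodMk continuous_id)).comp
        continuous_snd).continuousAt.inv₀ hne2
  exact c1.sub c2

end Cont

lemma myContraction_tendsto (δ ε : ℕ → ℝ) (L : ℝ) (hL0 : 0 ≤ L) (hL1 : L < 1)
    (hδ : ∀ k, 0 ≤ δ k) (hrec : ∀ k, δ (k + 1) ≤ L * δ k + ε k)
    (hε : Tendsto ε atTop (nhds 0)) : Tendsto δ atTop (nhds 0) := by
  rw [Metric.tendsto_atTop]
  intro e he
  have hc : 0 < (1 - L) * (e / 2) := mul_pos (by linarith) (by linarith)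
  obtain ⟨K1, hK1⟩ := (Metric.tendsto_atTop.mp hε) _ hc
  have key : ∀ j, δ (K1 + j) ≤ L ^ j * δ K1 + e / 2 := by
    intro j
    induction j with
    | zero => simp [hδ K1]; nlinarith [hδ K1]
    | succ j ih =>
      have h1 : δ (K1 + j + 1) ≤ L * δ (K1 + j) + ε (K1 + j) := hrec _
      have h2 : ε (K1 + j) ≤ (1 - L) * (e / 2) := by
        have := hK1 (K1 + j) (Nat.le_add_right _ _)
        rw [Real.dist_eq, sub_zero] at this
        exact (le_abs_self _).trans this.le
      have h3 : L * δ (K1 + j) ≤ L * (L ^ j * δ K1 + e / 2) :=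
        mul_le_mul_of_nonneg_left ih hL0
      have heq : δ (K1 + (j + 1)) = δ (K1 + j + 1) := by ring_nf
      rw [heq]
      calc δ (K1 + j + 1) ≤ L * (L ^ j * δ K1 + e / 2) + (1 - L) * (e / 2) := by linarith
        _ = L ^ (j + 1) * δ K1 + e / 2 := by ring
  have hpow : Tendsto (fun j => L ^ j * δ K1) atTop (nhds 0) := by
    have := tendsto_pow_atTop_nhds_zero_of_lt_one hL0 hL1
    simpa using this.mul_const (δ K1)
  obtain ⟨J, hJ⟩ := (Metric.tendsto_atTop.mp hpow) (e / 2) (by linarith)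
  refine ⟨K1 + J, fun k hk => ?_⟩
  have hpj : L ^ (k - K1) * δ K1 < e / 2 := by
    have := hJ (k - K1) (by omega)
    rw [Real.dist_eq, sub_zero] at this
    exact (le_abs_self _).trans_lt this
  have hδk : δ k ≤ L ^ (k - K1) * δ K1 + e / 2 := by
    have := key (k - K1)
    rwa [Nat.add_sub_cancel' (by omega : K1 ≤ k)] at this
  rw [Real.dist_eq, sub_zero, abs_of_nonneg (hδ k)]
  linarith

/-- **Theorem 2: convergence of EnKI-MC (I).** -/
theorem enkiMC_convergence {m n N : ℕ}
    (A : Matrix (Fin m) (Fin n) ℝ) (d : Fin m → ℝ) (μ : ℝ) (hμ : 0 < μ)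
    (α : ℕ → ℝ) (hα1 : ∀ k, 1 ≤ α k) (hαbdd : ∃ Mb : ℝ, ∀ k, α k ≤ Mb)
    (hαlim : Tendsto α atTop (nhds 1))
    (u : ℕ → Fin N → Fin n → ℝ)
    (hiter : ∀ k, u (k + 1) = enkiStep A d μ (α k) (u k))
    (hconv : ∀ w : ℕ → Fin N → Fin n → ℝ,
      (∀ i, w 0 i ∈ Submodule.span ℝ (Set.range (u 0))) →
      (∀ k, w (k + 1) = enkiStep A d μ 1 (w k)) →
      ∃ wl : Fin N → Fin n → ℝ,
        Tendsto w atTop (nhds wl) ∧ ∀ i j, wl i = wl j)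
    (hbdd : ∃ R : ℝ, ∀ k, ensNorm (u k) ≤ R)
    (hcontr : ∃ (k₀ : ℕ) (L : ℝ), 0 ≤ L ∧ L < 1 ∧
      ∀ v : ℕ → Fin N → Fin n → ℝ, v k₀ = u k₀ →
        (∀ k, k₀ ≤ k → v (k + 1) = enkiStep A d μ 1 (v k)) →
        ∀ k, k₀ ≤ k →
          ensNorm (enkiStep A d μ 1 (u k) - enkiStep A d μ 1 (v k)) ≤
            L * ensNorm (u k - v k)) :
    (∀ k i, u k i ∈ Submodule.span ℝ (Set.range (u 0))) ∧
      ∃ ustar : Fin N → Fin n → ℝ,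
        Tendsto u atTop (nhds ustar) ∧
        enkiStep A d μ 1 ustar = ustar ∧
        ∀ i j, ustar i = ustar j := by
  obtain ⟨R, hR⟩ := hbdd
  obtain ⟨k₀, L, hL0, hL1, hLcontr⟩ := hcontr
  obtain ⟨Mb, hMb⟩ := hαbdd
  have hspan : ∀ k i, u k i ∈ Submodule.span ℝ (Set.range (u 0)) := by
    intro k
    induction k with
    | zero => exact fun i => Submodule.subset_span ⟨i, rfl⟩
    | succ k ih =>
      intro i
      rw [hiter k]
      exact enkiStep_mem A d μ (α k) _ (u k) ih i
  refine ⟨hspan, ?_⟩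
  -- the vanilla EnKI iteration started from `u k₀`
  set w : ℕ → Fin N → Fin n → ℝ := fun j => (enkiStep A d μ 1)^[j] (u k₀) with hw
  have hw0 : w 0 = u k₀ := rfl
  have hwsucc : ∀ j, w (j + 1) = enkiStep A d μ 1 (w j) := fun j =>
    Function.iterate_succ_apply' _ _ _
  obtain ⟨wl, hwl, hwlcoll⟩ := hconv w (fun i => hspan k₀ i) hwsucc
  set v : ℕ → Fin N → Fin n → ℝ := fun k => w (k - k₀) with hv
  have hvk₀ : v k₀ = u k₀ := by simp [hv, hw0]
  have hvsucc : ∀ k, k₀ ≤ k → v (k + 1) = enkiStep A d μ 1 (v k) := by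
    intro k hk
    have h : k + 1 - k₀ = (k - k₀) + 1 := by omega
    simp only [hv, h]
    exact hwsucc _
  have hcon := hLcontr v hvk₀ hvsucc
  -- the perturbation map and its smallness along the iteration
  set Fd : ℝ × (Fin N → Fin n → ℝ) → (Fin N → Fin n → ℝ) :=
    fun p => enkiStep A d μ p.1 p.2 - enkiStep A d μ 1 p.2 with hFd
  have hR0 : (0 : ℝ) ≤ R := (ensNorm_nonneg (u 0)).trans (hR 0)
  have h1Mb : (1 : ℝ) ≤ Mb := (hα1 0).trans (hMb 0)
  set K : Set (ℝ × (Fin N → Fin n → ℝ)) := Set.Icc 1 Mb ×ˢ Metric.closedBall 0 R with hK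
  have hKcomp : IsCompact K := (isCompact_Icc).prod (isCompact_closedBall 0 R)
  have hKcont : ContinuousOn Fd K := fun p hp =>
    (enki_diff_continuousAt A d μ hμ (le_trans zero_le_one hp.1.1)).continuousWithinAt
  have hUC : UniformContinuousOn Fd K := hKcomp.uniformContinuousOn_of_continuous hKcont
  have humem : ∀ k, u k ∈ Metric.closedBall (0 : Fin N → Fin n → ℝ) R := by
    intro k
    rw [Metric.mem_closedBall, dist_zero_right]
    exact (pi_norm_le_ensNorm _).trans (hR k)
  have hFd0 : Tendsto (fun k => Fd (α k, u k)) atTop (nhds 0) := by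
    rw [Metric.tendsto_atTop]
    intro e he
    obtain ⟨dd, hdd, hball⟩ := (Metric.uniformContinuousOn_iff.mp hUC) e he
    obtain ⟨K2, hK2⟩ := Metric.tendsto_atTop.mp hαlim dd hdd
    refine ⟨K2, fun k hk => ?_⟩
    have hpmem : ((α k, u k) : ℝ × (Fin N → Fin n → ℝ)) ∈ K := ⟨⟨hα1 k, hMb k⟩, humem k⟩
    have hqmem : (((1 : ℝ), u k) : ℝ × (Fin N → Fin n → ℝ)) ∈ K :=
      ⟨⟨le_refl 1, h1Mb⟩, humem k⟩
    have hdist : dist ((α k, u k) : ℝ × (Fin N → Fin n → ℝ)) ((1 : ℝ), u k) < dd := by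
      rw [Prod.dist_eq]
      simpa [dist_self, max_eq_left dist_nonneg] using hK2 k hk
    have := hball _ hpmem _ hqmem hdist
    have hq0 : Fd ((1 : ℝ), u k) = 0 := sub_self _
    rwa [hq0] at this
  have hε : Tendsto (fun j => ensNorm (Fd (α (j + k₀), u (j + k₀)))) atTop (nhds 0) := by
    have hh := (ensNorm_continuous.tendsto 0).comp (hFd0.comp (tendsto_add_atTop_nat k₀))
    simpa [ensNorm_zero, Function.comp_def] using hh
  set δs : ℕ → ℝ := fun j => ensNorm (u (j + k₀) - v (j + k₀)) with hδs
  have hδrec : ∀ j, δs (j + 1) ≤ L * δs j + ensNorm (Fd (α (j + k₀), u (j + k₀))) := by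
    intro j
    set k := j + k₀ with hkdef
    have hk : k₀ ≤ k := Nat.le_add_left _ _
    have e1 : u (k + 1) - v (k + 1) =
        Fd (α k, u k) + (enkiStep A d μ 1 (u k) - enkiStep A d μ 1 (v k)) := by
      rw [hiter k, hvsucc k hk]
      exact (sub_add_sub_cancel _ _ _).symm
    have hidx : j + 1 + k₀ = k + 1 := by omega
    have hδeq : δs (j + 1) = ensNorm (u (k + 1) - v (k + 1)) := by rw [hδs]; simp only [hidx]
    rw [hδeq, e1]
    have htr := ensNorm_add_le (Fd (α k, u k))
      (enkiStep A d μ 1 (u k) - enkiStep A d μ 1 (v k))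
    have hco := hcon k hk
    have hδj : ensNorm (u k - v k) = δs j := rfl
    rw [hδj] at hco
    linarith
  have hδ0 : Tendsto δs atTop (nhds 0) :=
    myContraction_tendsto δs _ L hL0 hL1 (fun j => ensNorm_nonneg _) hδrec hε
  have hvw : ∀ j, v (j + k₀) = w j := by
    intro j
    show w (j + k₀ - k₀) = w j
    rw [Nat.add_sub_cancel]
  have hwl' : Tendsto (fun j => v (j + k₀)) atTop (nhds wl) := by
    have : (fun j => v (j + k₀)) = w := funext hvw
    rw [this]
    exact hwl
  have hdiff0 : Tendsto (fun j => u (j + k₀) - v (j + k₀)) atTop (nhds 0) :=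
    squeeze_zero_norm (fun j => pi_norm_le_ensNorm _) hδ0
  have hulim : Tendsto (fun j => u (j + k₀)) atTop (nhds wl) := by
    have h2 := hwl'.add hdiff0
    have h3 : (fun j => v (j + k₀) + (u (j + k₀) - v (j + k₀))) = fun j => u (j + k₀) :=
      funext fun j => by abel
    rw [h3] at h2
    simpa using h2
  have hufull : Tendsto u atTop (nhds wl) := (tendsto_add_atTop_iff_nat k₀).mp hulim
  have hfix : enkiStep A d μ 1 wl = wl := by
    funext i
    simp [enkiStep, sampleCov_of_collapsed wl hwlcoll, Matrix.zero_mul, Matrix.zero_mulVec]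
  exact ⟨wl, hufull, hfix, hwlcoll⟩
end

section
/- Let μ > 0, A ∈ ℝ^{m×n}, C ∈ ℝ^{n×n} symmetric positive semidefinite, B = ACAᵀ, M(α) = μI_m + αB, and r̄ ∈ ℝ^m. Let q ∈ (0,1), ε_δ > 0, and k ≥ 1 an integer, and set δ = (3/(4q))·λ_max(B)²·‖r̄‖₂⁴/(μ + λ_min(B))⁴ + ε_δ·k. Define ζ_δ(α) = 1 + (r̄ᵀM(α)⁻¹r̄)·(r̄ᵀM(α)⁻¹ B M(α)⁻¹ r̄)/(4δ). Then ζ_δ maps [1,∞) into [1,∞) and is a contraction on [1,∞) (Lipschitz with constant at most q < 1); consequently ζ_δ has a unique fixed point α* ∈ [1,∞), and for every starting point α⁰ ∈ [1,∞) the fixed-point iterates α^{p+1} = ζ_δ(α^p) converge to α*. -/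
open Matrix Filter

/-- The Euclidean norm of a vector in `ℝᵏ`. -/
noncomputable def eNorm {k : ℕ} (x : Fin k → ℝ) : ℝ := Real.sqrt (∑ i, x i ^ 2)

lemma eNorm_nonneg {k : ℕ} (x : Fin k → ℝ) : 0 ≤ eNorm x := Real.sqrt_nonneg _
lemma eNorm_sq {k : ℕ} (x : Fin k → ℝ) : eNorm x ^ 2 = x ⬝ᵥ x := by
  rw [eNorm, Real.sq_sqrt (Finset.sum_nonneg fun i _ => sq_nonneg _)]
  simp [dotProduct, sq]

lemma eNorm_smul {k : ℕ} (c : ℝ) (x : Fin k → ℝ) : eNorm (c • x) = |c| * eNorm x := by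
  rw [eNorm, eNorm]
  have : ∑ i, (c • x) i ^ 2 = c ^ 2 * ∑ i, x i ^ 2 := by
    rw [Finset.mul_sum]; exact Finset.sum_congr rfl fun i _ => by simp [mul_pow]
  rw [this, Real.sqrt_mul (sq_nonneg c), Real.sqrt_sq_eq_abs]

lemma dot_nonneg {m : ℕ} {B : Matrix (Fin m) (Fin m) ℝ} (hB : B.PosSemidef) (x : Fin m → ℝ) :
    0 ≤ x ⬝ᵥ (B *ᵥ x) := by
  have := hB.dotProduct_mulVec_nonneg x
  simpa using this

lemma sSup_spectrum_nonneg {m : ℕ} {B : Matrix (Fin m) (Fin m) ℝ} (hB : B.PosSemidef) :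
    0 ≤ sSup (spectrum ℝ B) := by
  rw [Matrix.IsHermitian.spectrum_real_eq_range_eigenvalues hB.1]
  exact Real.sSup_nonneg (by rintro x ⟨i, rfl⟩; exact hB.eigenvalues_nonneg i)

lemma sInf_spectrum_nonneg {m : ℕ} {B : Matrix (Fin m) (Fin m) ℝ} (hB : B.PosSemidef) :
    0 ≤ sInf (spectrum ℝ B) := by
  rw [Matrix.IsHermitian.spectrum_real_eq_range_eigenvalues hB.1]
  exact Real.sInf_nonneg (by rintro x ⟨i, rfl⟩; exact hB.eigenvalues_nonneg i)

lemma abs_dot_le {k : ℕ} (x y : Fin k → ℝ) : |x ⬝ᵥ y| ≤ eNorm x * eNorm y := by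
  rw [abs_le]
  constructor
  · have h := Real.sum_mul_le_sqrt_mul_sqrt Finset.univ x (fun i => - y i)
    simp only [mul_neg, neg_sq, Finset.sum_neg_distrib] at h
    have : -(x ⬝ᵥ y) ≤ eNorm x * eNorm y := by simpa [eNorm, dotProduct] using h
    linarith
  · have h := Real.sum_mul_le_sqrt_mul_sqrt Finset.univ x y
    simpa [eNorm, dotProduct] using h

lemma quad_bounds {m : ℕ} {B : Matrix (Fin m) (Fin m) ℝ} (hB : B.IsHermitian) (x : Fin m → ℝ) :
    sInf (spectrum ℝ B) * (x ⬝ᵥ x) ≤ x ⬝ᵥ (B *ᵥ x) ∧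
    x ⬝ᵥ (B *ᵥ x) ≤ sSup (spectrum ℝ B) * (x ⬝ᵥ x) := by
  rcases Nat.eq_zero_or_pos m with hm | hm
  · subst hm; simp [dotProduct]
  have hne : Nonempty (Fin m) := ⟨⟨0, hm⟩⟩
  have hUstar : star (hB.eigenvectorUnitary : Matrix (Fin m) (Fin m) ℝ)
      = (hB.eigenvectorUnitary : Matrix (Fin m) (Fin m) ℝ)ᵀ := by
    rw [Matrix.star_eq_conjTranspose, Matrix.conjTranspose_eq_transpose_of_trivial]
  set U : Matrix (Fin m) (Fin m) ℝ := (hB.eigenvectorUnitary : Matrix (Fin m) (Fin m) ℝ) with hU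
  have hUU : U * Uᵀ = 1 := by
    rw [← hUstar]
    exact (Matrix.mem_unitaryGroup_iff).mp hB.eigenvectorUnitary.2
  have hsp : B = U * Matrix.diagonal hB.eigenvalues * Uᵀ := by
    rw [← hUstar]
    have := hB.spectral_theorem
    simpa [Function.comp, RCLike.ofReal_real_eq_id] using this
  have hquad : x ⬝ᵥ (B *ᵥ x) = ∑ i, hB.eigenvalues i * ((Uᵀ *ᵥ x) i)^2 := by
    conv_lhs => rw [hsp]
    rw [← Matrix.mulVec_mulVec, ← Matrix.mulVec_mulVec, Matrix.dotProduct_mulVec,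
      ← Matrix.mulVec_transpose]
    simp only [Matrix.mulVec_diagonal, dotProduct, sq]
    exact Finset.sum_congr rfl fun i _ => by ring
  have hnorm : x ⬝ᵥ x = ∑ i, ((Uᵀ *ᵥ x) i)^2 := by
    have h2 : (Uᵀ *ᵥ x) ⬝ᵥ (Uᵀ *ᵥ x) = x ⬝ᵥ x := by
      rw [Matrix.dotProduct_mulVec, Matrix.vecMul_transpose, Matrix.mulVec_mulVec, hUU,
        Matrix.one_mulVec]
    rw [← h2]; simp [dotProduct, sq]
  have hbddA : BddAbove (spectrum ℝ B) := Matrix.finite_real_spectrum.bddAbove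
  have hbddB : BddBelow (spectrum ℝ B) := Matrix.finite_real_spectrum.bddBelow
  constructor
  · rw [hquad, hnorm, Finset.mul_sum]
    exact Finset.sum_le_sum fun i _ =>
      mul_le_mul_of_nonneg_right (csInf_le hbddB (hB.eigenvalues_mem_spectrum_real i))
        (sq_nonneg _)
  · rw [hquad, hnorm, Finset.mul_sum]
    exact Finset.sum_le_sum fun i _ =>
      mul_le_mul_of_nonneg_right (le_csSup hbddA (hB.eigenvalues_mem_spectrum_real i))
        (sq_nonneg _)


lemma bilin_bound {m : ℕ} {B : Matrix (Fin m) (Fin m) ℝ} (hB : B.PosSemidef)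
    (w v : Fin m → ℝ) :
    |w ⬝ᵥ (B *ᵥ v)| ≤ sSup (spectrum ℝ B) * eNorm w * eNorm v := by
  obtain ⟨E, hE⟩ : ∃ E : Matrix (Fin m) (Fin m) ℝ, B = Eᴴ * E := by
    open scoped MatrixOrder in
    obtain ⟨E, hE⟩ := CStarAlgebra.nonneg_iff_eq_star_mul_self.mp hB.nonneg
    exact ⟨E, hE⟩
  have hEH : Eᴴ = Eᵀ := Matrix.conjTranspose_eq_transpose_of_trivial E
  have hfact : ∀ a b : Fin m → ℝ, a ⬝ᵥ (B *ᵥ b) = (E *ᵥ a) ⬝ᵥ (E *ᵥ b) := by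
    intro a b
    rw [hE, hEH, ← Matrix.mulVec_mulVec, Matrix.dotProduct_mulVec, Matrix.vecMul_transpose]
  set L := sSup (spectrum ℝ B) with hL
  have hL0 : 0 ≤ L := sSup_spectrum_nonneg hB
  have key : ∀ a : Fin m → ℝ, eNorm (E *ᵥ a) ≤ Real.sqrt L * eNorm a := by
    intro a
    have h1 : eNorm (E *ᵥ a) ^ 2 ≤ L * eNorm a ^ 2 := by
      rw [eNorm_sq, eNorm_sq, ← hfact]
      exact (quad_bounds hB.1 a).2
    have := Real.sqrt_le_sqrt h1
    rwa [Real.sqrt_sq (eNorm_nonneg _), Real.sqrt_mul hL0, Real.sqrt_sq (eNorm_nonneg _)] at this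
  calc |w ⬝ᵥ (B *ᵥ v)| = |(E *ᵥ w) ⬝ᵥ (E *ᵥ v)| := by rw [hfact]
    _ ≤ eNorm (E *ᵥ w) * eNorm (E *ᵥ v) := abs_dot_le _ _
    _ ≤ (Real.sqrt L * eNorm w) * (Real.sqrt L * eNorm v) := by
        exact mul_le_mul (key w) (key v) (eNorm_nonneg _)
          (mul_nonneg (Real.sqrt_nonneg _) (eNorm_nonneg _))
    _ = L * eNorm w * eNorm v := by
        rw [mul_mul_mul_comm, Real.mul_self_sqrt hL0, mul_assoc]

lemma mulVec_bound {m : ℕ} {B : Matrix (Fin m) (Fin m) ℝ} (hB : B.PosSemidef)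
    (v : Fin m → ℝ) : eNorm (B *ᵥ v) ≤ sSup (spectrum ℝ B) * eNorm v := by
  set L := sSup (spectrum ℝ B) with hL
  have hL0 : 0 ≤ L := sSup_spectrum_nonneg hB
  rcases eq_or_lt_of_le (eNorm_nonneg (B *ᵥ v)) with h0 | h0
  · rw [← h0]; exact mul_nonneg hL0 (eNorm_nonneg _)
  · have h1 : eNorm (B *ᵥ v) ^ 2 ≤ L * eNorm (B *ᵥ v) * eNorm v := by
      rw [eNorm_sq]
      calc (B *ᵥ v) ⬝ᵥ (B *ᵥ v) ≤ |(B *ᵥ v) ⬝ᵥ (B *ᵥ v)| := le_abs_self _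
        _ = |(B *ᵥ v) ⬝ᵥ (B *ᵥ v)| := rfl
        _ ≤ L * eNorm (B *ᵥ v) * eNorm v := bilin_bound hB (B *ᵥ v) v
    nlinarith [sq_nonneg (eNorm (B *ᵥ v))]

lemma M_lemmas {m : ℕ} {B : Matrix (Fin m) (Fin m) ℝ} (hB : B.PosSemidef) {μ α : ℝ}
    (hμ : 0 < μ) (hα : 1 ≤ α) :
    IsUnit (μ • (1 : Matrix (Fin m) (Fin m) ℝ) + α • B).det ∧
    (∀ x : Fin m → ℝ, (μ + sInf (spectrum ℝ B)) * (x ⬝ᵥ x) ≤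
      x ⬝ᵥ ((μ • (1 : Matrix (Fin m) (Fin m) ℝ) + α • B) *ᵥ x)) ∧
    ((μ • (1 : Matrix (Fin m) (Fin m) ℝ) + α • B)⁻¹)ᵀ =
      (μ • (1 : Matrix (Fin m) (Fin m) ℝ) + α • B)⁻¹ ∧
    (∀ y : Fin m → ℝ, eNorm ((μ • (1 : Matrix (Fin m) (Fin m) ℝ) + α • B)⁻¹ *ᵥ y) ≤
      eNorm y / (μ + sInf (spectrum ℝ B))) := by
  set Mm := μ • (1 : Matrix (Fin m) (Fin m) ℝ) + α • B with hMm
  set c := μ + sInf (spectrum ℝ B) with hc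
  have hlmin0 : 0 ≤ sInf (spectrum ℝ B) := sInf_spectrum_nonneg hB
  have hc0 : 0 < c := by rw [hc]; linarith
  have hBT : Bᵀ = B := by
    have := hB.1
    rwa [Matrix.IsHermitian, Matrix.conjTranspose_eq_transpose_of_trivial] at this
  have hMT : Mmᵀ = Mm := by
    rw [hMm, Matrix.transpose_add, Matrix.transpose_smul, Matrix.transpose_smul,
      Matrix.transpose_one, hBT]
  have hcoerc : ∀ x : Fin m → ℝ, c * (x ⬝ᵥ x) ≤ x ⬝ᵥ (Mm *ᵥ x) := by
    intro x
    have hexp : x ⬝ᵥ (Mm *ᵥ x) = μ * (x ⬝ᵥ x) + α * (x ⬝ᵥ (B *ᵥ x)) := by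
      rw [hMm, Matrix.add_mulVec, Matrix.smul_mulVec, Matrix.smul_mulVec,
        Matrix.one_mulVec, dotProduct_add, dotProduct_smul,
        dotProduct_smul, smul_eq_mul, smul_eq_mul]
    have h1 := (quad_bounds hB.1 x).1
    have h2 := dot_nonneg hB x
    have hxx : 0 ≤ x ⬝ᵥ x := Finset.sum_nonneg fun i _ => mul_self_nonneg _
    rw [hexp, hc]
    nlinarith
  have hdet : IsUnit Mm.det := by
    have hpd : Mm.PosDef := by
      refine Matrix.PosDef.of_dotProduct_mulVec_pos ?_ ?_
      · rwa [Matrix.IsHermitian, Matrix.conjTranspose_eq_transpose_of_trivial]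
      · intro x hx
        have hxx0 : 0 < x ⬝ᵥ x := by
          rcases (Finset.sum_nonneg fun i _ =>
            mul_self_nonneg (x i) : (0:ℝ) ≤ x ⬝ᵥ x).lt_or_eq with h | h
          · exact h
          · exact absurd (dotProduct_self_eq_zero.mp h.symm) hx
        have := hcoerc x
        have : 0 < x ⬝ᵥ (Mm *ᵥ x) := lt_of_lt_of_le (by positivity) this
        simpa using this
    exact isUnit_iff_ne_zero.mpr (ne_of_gt hpd.det_pos)
  have hinvT : (Mm⁻¹)ᵀ = Mm⁻¹ := by rw [Matrix.transpose_nonsing_inv, hMT]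
  refine ⟨hdet, hcoerc, hinvT, ?_⟩
  intro y
  set x := Mm⁻¹ *ᵥ y with hx
  have hMx : Mm *ᵥ x = y := by
    rw [hx, Matrix.mulVec_mulVec, Matrix.mul_nonsing_inv _ hdet, Matrix.one_mulVec]
  have h1 : c * (eNorm x) ^ 2 ≤ eNorm x * eNorm y := by
    rw [eNorm_sq]
    calc c * (x ⬝ᵥ x) ≤ x ⬝ᵥ (Mm *ᵥ x) := hcoerc x
      _ = x ⬝ᵥ y := by rw [hMx]
      _ ≤ |x ⬝ᵥ y| := le_abs_self _
      _ ≤ eNorm x * eNorm y := abs_dot_le _ _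
  rcases (eNorm_nonneg x).lt_or_eq with h0 | h0
  · rw [le_div_iff₀ hc0]
    nlinarith
  · rw [← h0]
    exact div_nonneg (eNorm_nonneg _) hc0.le

lemma fixed_unique_aux {q x y : ℝ} (hq0 : 0 < q) (hq1 : q < 1)
    (h : |x - y| ≤ q * |x - y|) : x = y := by
  have h1 : 0 ≤ |x - y| := abs_nonneg _
  have h2 : |x - y| = 0 := by nlinarith
  exact sub_eq_zero.mp (abs_eq_zero.mp h2)

/-- **Proposition 4: unique fixed point of the correction-factor map.** With
`B = ACAᵀ`, `M(α) = μI + αB`, regularization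
`δ = (3/(4q))·λ_max(B)²‖r̄‖₂⁴/(μ + λ_min(B))⁴ + ε_δ·k` and
`ζ_δ(α) = 1 + (r̄ᵀM(α)⁻¹r̄)(r̄ᵀM(α)⁻¹BM(α)⁻¹r̄)/(4δ)`, the map `ζ_δ` sends `[1,∞)` to
itself, is a contraction there with constant at most `q < 1`, has a unique fixed point
`α* ∈ [1,∞)`, and the fixed-point iterates from any starting point in `[1,∞)` converge
to `α*`. -/
theorem zeta_contraction_unique_fixed_point {m n : ℕ} (μ : ℝ) (hμ : 0 < μ)
    (A : Matrix (Fin m) (Fin n) ℝ) (C : Matrix (Fin n) (Fin n) ℝ) (hC : C.PosSemidef)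
    (rbar : Fin m → ℝ) (q : ℝ) (hq0 : 0 < q) (hq1 : q < 1)
    (εδ : ℝ) (hεδ : 0 < εδ) (k : ℕ) (hk : 1 ≤ k) :
    let B : Matrix (Fin m) (Fin m) ℝ := A * C * Aᵀ
    let M : ℝ → Matrix (Fin m) (Fin m) ℝ := fun α => μ • 1 + α • B
    let lmax : ℝ := sSup (spectrum ℝ B)
    let lmin : ℝ := sInf (spectrum ℝ B)
    let δ : ℝ := (3 / (4 * q)) * lmax ^ 2 * eNorm rbar ^ 4 / (μ + lmin) ^ 4 + εδ * k
    let ζ : ℝ → ℝ := fun α => 1 + (rbar ⬝ᵥ ((M α)⁻¹ *ᵥ rbar)) *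
      (rbar ⬝ᵥ ((M α)⁻¹ *ᵥ (B *ᵥ ((M α)⁻¹ *ᵥ rbar)))) / (4 * δ)
    (∀ α, 1 ≤ α → 1 ≤ ζ α) ∧
    (∀ α β, 1 ≤ α → 1 ≤ β → |ζ α - ζ β| ≤ q * |α - β|) ∧
    ∃ αstar : ℝ, (1 ≤ αstar ∧ ζ αstar = αstar) ∧
      (∀ β, 1 ≤ β → ζ β = β → β = αstar) ∧
      ∀ a : ℕ → ℝ, 1 ≤ a 0 → (∀ p, a (p + 1) = ζ (a p)) →
        Tendsto a atTop (nhds αstar) := by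
  intro B M lmax lmin δ ζ
  have hBpsd : B.PosSemidef := by
    have h := hC.mul_mul_conjTranspose_same A
    rwa [Matrix.conjTranspose_eq_transpose_of_trivial] at h
  have hN0 : 0 ≤ eNorm rbar := eNorm_nonneg rbar
  set N := eNorm rbar with hNdef
  have hlmin0 : 0 ≤ lmin := sInf_spectrum_nonneg hBpsd
  have hlmax0 : 0 ≤ lmax := sSup_spectrum_nonneg hBpsd
  have hc0 : 0 < μ + lmin := by linarith
  set c := μ + lmin with hcdef
  set L := lmax with hLdef
  have hδdef : δ = 3 / (4 * q) * L ^ 2 * N ^ 4 / c ^ 4 + εδ * k := rfl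
  have hk1 : (1:ℝ) ≤ (k:ℝ) := by exact_mod_cast hk
  have hδ0 : 0 < δ := by
    rw [hδdef]
    have h1 : 0 ≤ 3 / (4 * q) * L ^ 2 * N ^ 4 / c ^ 4 :=
      div_nonneg (mul_nonneg (mul_nonneg (div_nonneg (by norm_num) (by linarith))
        (sq_nonneg _)) (by positivity)) (by positivity)
    nlinarith
  have hdet : ∀ γ, 1 ≤ γ → IsUnit (M γ).det := fun γ hγ => (M_lemmas hBpsd hμ hγ).1
  have hcoerc : ∀ γ, 1 ≤ γ → ∀ x, c * (x ⬝ᵥ x) ≤ x ⬝ᵥ (M γ *ᵥ x) :=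
    fun γ hγ => (M_lemmas hBpsd hμ hγ).2.1
  have hsymm : ∀ γ, 1 ≤ γ → ((M γ)⁻¹)ᵀ = (M γ)⁻¹ := fun γ hγ => (M_lemmas hBpsd hμ hγ).2.2.1
  have hbnd : ∀ γ, 1 ≤ γ → ∀ y, eNorm ((M γ)⁻¹ *ᵥ y) ≤ eNorm y / c :=
    fun γ hγ => (M_lemmas hBpsd hμ hγ).2.2.2
  set u : ℝ → Fin m → ℝ := fun γ => (M γ)⁻¹ *ᵥ rbar with hu
  have hswap : ∀ γ, 1 ≤ γ → ∀ z, rbar ⬝ᵥ ((M γ)⁻¹ *ᵥ z) = u γ ⬝ᵥ z := by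
    intro γ hγ z
    rw [Matrix.dotProduct_mulVec, ← Matrix.mulVec_transpose, hsymm γ hγ]
  have hrbar : ∀ γ, 1 ≤ γ → M γ *ᵥ u γ = rbar := by
    intro γ hγ
    show M γ *ᵥ ((M γ)⁻¹ *ᵥ rbar) = rbar
    rw [Matrix.mulVec_mulVec, Matrix.mul_nonsing_inv _ (hdet γ hγ), Matrix.one_mulVec]
  set f : ℝ → ℝ := fun γ => rbar ⬝ᵥ ((M γ)⁻¹ *ᵥ rbar) with hfdef
  set g : ℝ → ℝ := fun γ => rbar ⬝ᵥ ((M γ)⁻¹ *ᵥ (B *ᵥ ((M γ)⁻¹ *ᵥ rbar))) with hgdef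
  have hζdef : ∀ γ, ζ γ = 1 + f γ * g γ / (4 * δ) := fun γ => rfl
  have hfval : ∀ γ, 1 ≤ γ → f γ = u γ ⬝ᵥ rbar := fun γ hγ => hswap γ hγ rbar
  have hgval : ∀ γ, 1 ≤ γ → g γ = u γ ⬝ᵥ (B *ᵥ u γ) := fun γ hγ => hswap γ hγ _
  have hfnn : ∀ γ, 1 ≤ γ → 0 ≤ f γ := by
    intro γ hγ
    rw [hfval γ hγ]
    conv_rhs => rw [← hrbar γ hγ]
    have h1 := hcoerc γ hγ (u γ)
    have h2 : 0 ≤ u γ ⬝ᵥ u γ := Finset.sum_nonneg fun i _ => mul_self_nonneg _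
    nlinarith
  have hgnn : ∀ γ, 1 ≤ γ → 0 ≤ g γ := by
    intro γ hγ; rw [hgval γ hγ]; exact dot_nonneg hBpsd _
  have part1 : ∀ α, 1 ≤ α → 1 ≤ ζ α := by
    intro α hα
    rw [hζdef]
    have h1 := mul_nonneg (hfnn α hα) (hgnn α hα)
    have h2 : 0 ≤ f α * g α / (4 * δ) := div_nonneg h1 (by linarith)
    linarith
  have hP : 0 ≤ N / c := div_nonneg hN0 hc0.le
  have hunorm : ∀ γ, 1 ≤ γ → eNorm (u γ) ≤ N / c := fun γ hγ => hbnd γ hγ rbar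
  have hfbound : ∀ γ, 1 ≤ γ → |f γ| ≤ N * (N / c) := by
    intro γ hγ
    rw [hfval γ hγ, dotProduct_comm]
    calc |rbar ⬝ᵥ u γ| ≤ N * eNorm (u γ) := abs_dot_le rbar (u γ)
      _ ≤ N * (N / c) := mul_le_mul_of_nonneg_left (hunorm γ hγ) hN0
  have hgbound : ∀ γ, 1 ≤ γ → |g γ| ≤ L * (N / c) * (N / c) := by
    intro γ hγ
    rw [hgval γ hγ]
    calc |u γ ⬝ᵥ (B *ᵥ u γ)| ≤ L * eNorm (u γ) * eNorm (u γ) := bilin_bound hBpsd _ _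
      _ ≤ L * (N / c) * (N / c) :=
        mul_le_mul (mul_le_mul_of_nonneg_left (hunorm γ hγ) hlmax0) (hunorm γ hγ)
          (eNorm_nonneg _) (mul_nonneg hlmax0 hP)
  have hMdiffmat : ∀ γ η : ℝ, M η = M γ + (η - γ) • B := by
    intro γ η
    show μ • (1 : Matrix (Fin m) (Fin m) ℝ) + η • B
      = μ • (1 : Matrix (Fin m) (Fin m) ℝ) + γ • B + (η - γ) • B
    rw [add_assoc, ← add_smul]
    have : γ + (η - γ) = η := by ring
    rw [this]
  have hudiff : ∀ α β, 1 ≤ α → 1 ≤ β →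
      u α - u β = (β - α) • ((M α)⁻¹ *ᵥ (B *ᵥ u β)) := by
    intro α β hα hβ
    have h1 : rbar - M α *ᵥ u β = (β - α) • (B *ᵥ u β) := by
      conv_lhs => rw [← hrbar β hβ, hMdiffmat α β]
      rw [Matrix.add_mulVec, Matrix.smul_mulVec]
      abel
    have h2 : u α - u β = (M α)⁻¹ *ᵥ (rbar - M α *ᵥ u β) := by
      rw [Matrix.mulVec_sub]
      show u α - u β = u α - (M α)⁻¹ *ᵥ (M α *ᵥ u β)
      rw [Matrix.mulVec_mulVec, Matrix.nonsing_inv_mul _ (hdet α hα), Matrix.one_mulVec]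
    rw [h2, h1, Matrix.mulVec_smul]
  have hudnorm : ∀ α β, 1 ≤ α → 1 ≤ β →
      eNorm (u α - u β) ≤ |α - β| * (L * (N / c) / c) := by
    intro α β hα hβ
    rw [hudiff α β hα hβ, eNorm_smul, abs_sub_comm β α]
    refine mul_le_mul_of_nonneg_left ?_ (abs_nonneg _)
    calc eNorm ((M α)⁻¹ *ᵥ (B *ᵥ u β)) ≤ eNorm (B *ᵥ u β) / c := hbnd α hα _
      _ ≤ L * eNorm (u β) / c :=
        div_le_div_of_nonneg_right (mulVec_bound hBpsd (u β)) hc0.le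
      _ ≤ L * (N / c) / c :=
        div_le_div_of_nonneg_right (mul_le_mul_of_nonneg_left (hunorm β hβ) hlmax0) hc0.le
  have part2 : ∀ α β, 1 ≤ α → 1 ≤ β → |ζ α - ζ β| ≤ q * |α - β| := by
    intro α β hα hβ
    have hd0 : 0 ≤ eNorm (u α - u β) := eNorm_nonneg _
    have hD0 : 0 ≤ |α - β| := abs_nonneg _
    have hgdiff : g α - g β = (u α - u β) ⬝ᵥ (B *ᵥ u α) + u β ⬝ᵥ (B *ᵥ (u α - u β)) := by
      rw [hgval α hα, hgval β hβ]
      simp only [sub_dotProduct, Matrix.mulVec_sub, dotProduct_sub]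
      ring
    set d := eNorm (u α - u β) with hddef
    have hgd : |g α - g β| ≤ L * d * (N / c) + L * (N / c) * d := by
      rw [hgdiff]
      calc |(u α - u β) ⬝ᵥ (B *ᵥ u α) + u β ⬝ᵥ (B *ᵥ (u α - u β))|
          ≤ |(u α - u β) ⬝ᵥ (B *ᵥ u α)| + |u β ⬝ᵥ (B *ᵥ (u α - u β))| := abs_add_le _ _
        _ ≤ L * d * eNorm (u α) + L * eNorm (u β) * d :=
            add_le_add (bilin_bound hBpsd _ _) (bilin_bound hBpsd _ _)
        _ ≤ L * d * (N / c) + L * (N / c) * d :=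
            add_le_add
              (mul_le_mul_of_nonneg_left (hunorm α hα) (mul_nonneg hlmax0 hd0))
              (mul_le_mul_of_nonneg_right
                (mul_le_mul_of_nonneg_left (hunorm β hβ) hlmax0) hd0)
    have hfd : |f α - f β| ≤ N * d := by
      rw [hfval α hα, hfval β hβ, ← sub_dotProduct, dotProduct_comm]
      exact abs_dot_le rbar (u α - u β)
    have hdD : d ≤ |α - β| * (L * (N / c) / c) := hudnorm α β hα hβ
    have hsplit : |f α * g α - f β * g β| ≤ |f α| * |g α - g β| + |g β| * |f α - f β| := by
      have : f α * g α - f β * g β = f α * (g α - g β) + g β * (f α - f β) := by ring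
      rw [this]
      calc |f α * (g α - g β) + g β * (f α - f β)|
          ≤ |f α * (g α - g β)| + |g β * (f α - f β)| := abs_add_le _ _
        _ = |f α| * |g α - g β| + |g β| * |f α - f β| := by rw [abs_mul, abs_mul]
    have hS : |f α * g α - f β * g β| ≤ 3 * L * N * (N / c) * (N / c) * d := by
      have t1 : |f α| * |g α - g β| ≤ (N * (N / c)) * (L * d * (N / c) + L * (N / c) * d) :=
        mul_le_mul (hfbound α hα) hgd (abs_nonneg _) (mul_nonneg hN0 hP)
      have t2 : |g β| * |f α - f β| ≤ (L * (N / c) * (N / c)) * (N * d) :=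
        mul_le_mul (hgbound β hβ) hfd (abs_nonneg _)
          (mul_nonneg (mul_nonneg hlmax0 hP) hP)
      have : (N * (N / c)) * (L * d * (N / c) + L * (N / c) * d)
          + (L * (N / c) * (N / c)) * (N * d) = 3 * L * N * (N / c) * (N / c) * d := by ring
      linarith
    have hS2 : |f α * g α - f β * g β| ≤ (3 * L ^ 2 * N ^ 4 / c ^ 4) * |α - β| := by
      have h3 : 0 ≤ 3 * L * N * (N / c) * (N / c) :=
        mul_nonneg (mul_nonneg (mul_nonneg (by linarith) hN0) hP) hP
      have step : 3 * L * N * (N / c) * (N / c) * d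
          ≤ 3 * L * N * (N / c) * (N / c) * (|α - β| * (L * (N / c) / c)) :=
        mul_le_mul_of_nonneg_left hdD h3
      have heq : 3 * L * N * (N / c) * (N / c) * (|α - β| * (L * (N / c) / c))
          = (3 * L ^ 2 * N ^ 4 / c ^ 4) * |α - β| := by
        field_simp
      linarith
    have hKδ : 3 * L ^ 2 * N ^ 4 / c ^ 4 ≤ 4 * δ * q := by
      have heq : 4 * δ * q = 3 * L ^ 2 * N ^ 4 / c ^ 4 + 4 * (εδ * k) * q := by
        rw [hδdef]
        field_simp
      have hpos : 0 < 4 * (εδ * ↑k) * q :=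
        mul_pos (mul_pos (by norm_num) (mul_pos hεδ (lt_of_lt_of_le one_pos hk1))) hq0
      linarith
    have hζsub : ζ α - ζ β = (f α * g α - f β * g β) / (4 * δ) := by
      rw [hζdef, hζdef]; ring
    rw [hζsub, abs_div, abs_of_pos (by linarith : (0:ℝ) < 4 * δ),
      div_le_iff₀ (by linarith : (0:ℝ) < 4 * δ)]
    calc |f α * g α - f β * g β| ≤ (3 * L ^ 2 * N ^ 4 / c ^ 4) * |α - β| := hS2
      _ ≤ (4 * δ * q) * |α - β| := mul_le_mul_of_nonneg_right hKδ hD0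
      _ = q * |α - β| * (4 * δ) := by ring
  refine ⟨part1, part2, ?_⟩
  haveI : CompleteSpace (Set.Ici (1:ℝ)) := (isClosed_Ici (a := (1:ℝ))).completeSpace_coe
  haveI : Nonempty (Set.Ici (1:ℝ)) := ⟨⟨1, Set.mem_Ici.mpr le_rfl⟩⟩
  set F : Set.Ici (1:ℝ) → Set.Ici (1:ℝ) := fun x => ⟨ζ x, part1 x x.2⟩ with hFdef
  have hF : ContractingWith ⟨q, hq0.le⟩ F := by
    constructor
    · exact_mod_cast hq1
    · apply LipschitzWith.of_dist_le_mul
      intro x y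
      rw [Subtype.dist_eq, Subtype.dist_eq, Real.dist_eq, Real.dist_eq]
      show |ζ x.1 - ζ y.1| ≤ q * |x.1 - y.1|
      exact part2 x.1 y.1 x.2 y.2
  have hfixF : F (ContractingWith.fixedPoint F hF) = ContractingWith.fixedPoint F hF :=
    hF.fixedPoint_isFixedPt
  set astarv : ℝ := (ContractingWith.fixedPoint F hF).1 with hastarv
  have hζfix : ζ astarv = astarv := congrArg Subtype.val hfixF
  have hastar1 : 1 ≤ astarv := (ContractingWith.fixedPoint F hF).2
  clear_value astarv
  clear hastarv hfixF hF hFdef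
  clear_value F
  clear F
  refine ⟨astarv, ⟨hastar1, hζfix⟩, ?_, ?_⟩
  · intro β hβ hζβ
    have h := part2 β astarv hβ hastar1
    rw [hζβ, hζfix] at h
    exact fixed_unique_aux hq0 hq1 h
  · intro a ha0 harec
    have ha1 : ∀ p, 1 ≤ a p := by
      intro p
      induction p with
      | zero => exact ha0
      | succ p ih => rw [harec p]; exact part1 (a p) ih
    have hdist : ∀ p, |a p - astarv| ≤ q ^ p * |a 0 - astarv| := by
      intro p
      induction p with
      | zero => simp
      | succ p ih =>
        have h := part2 (a p) astarv (ha1 p) hastar1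
        rw [hζfix] at h
        calc |a (p+1) - astarv| = |ζ (a p) - ζ astarv| := by rw [harec p, hζfix]
          _ ≤ q * |a p - astarv| := part2 (a p) astarv (ha1 p) hastar1
          _ ≤ q * (q ^ p * |a 0 - astarv|) := mul_le_mul_of_nonneg_left ih hq0.le
          _ = q ^ (p+1) * |a 0 - astarv| := by ring
    rw [tendsto_iff_dist_tendsto_zero]
    refine squeeze_zero (g := fun p => q ^ p * |a 0 - astarv|) (fun p => dist_nonneg)
      (fun p => ?_) ?_
    · rw [Real.dist_eq]; exact hdist p
    · simpa using
        (tendsto_pow_atTop_nhds_zero_of_lt_one hq0.le hq1).mul_const |a 0 - astarv|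
end
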